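/- For the nrDFAwtl A_ex3 defined in the context, {ab(cacabb)ⁿc : n ≥ 0} ⊆ L(A_ex3), i.e., every word of the form ab(cacabb)ⁿc is accepted by A_ex3. -/

import Mathlib

/-- The end-of-tape behaviour of a non-returning automaton with translucent
letters: either a set of states to continue with (the empty set meaning that
the transition is undefined), or the operation `Accept`. -/
inductive EndMove (Q : Type) where
  | cont : Set Q → EndMove Q
  | accept : EndMove Q

/-- A nondeterministic finite automaton with translucent letters (NFAwtl).
`τ q` is the set of letters that are translucent for state `q`. -/
structure NFAwtl (Q : Type) (A : Type) where
  τ : Q → Set A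
  I : Set Q
  F : Set Q
  δ : Q → A → Set Q
  tr_compat : ∀ q a, a ∈ τ q → δ q a = ∅

namespace NFAwtl

variable {Q A : Type}

/-- A single computation step of an NFAwtl: the first letter (from the left)
that is not translucent for the current state is read and deleted. -/
inductive Step (M : NFAwtl Q A) : Q × List A → Q × List A → Prop
  | read (q q' : Q) (u v : List A) (a : A) :
      (∀ b ∈ u, b ∈ M.τ q) → a ∉ M.τ q → q' ∈ M.δ q a →
      Step M (q, u ++ a :: v) (q', u ++ v)

/-- The language accepted by an NFAwtl: words from which some computation
reaches a configuration whose remaining tape contents is translucent for a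
final state. -/
def lang (M : NFAwtl Q A) : Set (List A) :=
  { w | ∃ q₀ ∈ M.I, ∃ q w', Relation.ReflTransGen (Step M) (q₀, w) (q, w') ∧
        (∀ b ∈ w', b ∈ M.τ q) ∧ q ∈ M.F }

/-- An NFAwtl is deterministic (a DFAwtl) if it has a single initial state and
at most one transition for each state/letter pair. -/
def IsDet (M : NFAwtl Q A) : Prop :=
  (∃ q, M.I = {q}) ∧ ∀ q a, (M.δ q a).Subsingleton

end NFAwtl

/-- A configuration of a non-returning automaton with translucent letters:
`conf x q w` means the tape contains `x ++ w` followed by the end-of-tape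
marker, the current state is `q`, and the head is positioned at the first
letter of `w`; `accept` is the accepting halting configuration. -/
inductive NrConf (Q : Type) (A : Type) where
  | conf : List A → Q → List A → NrConf Q A
  | accept : NrConf Q A

/-- A non-returning nondeterministic finite automaton with translucent
letters (nrNFAwtl). -/
structure NrNFAwtl (Q : Type) (A : Type) where
  τ : Q → Set A
  I : Set Q
  δ : Q → A → Set Q
  δend : Q → EndMove Q
  tr_compat : ∀ q a, a ∈ τ q → δ q a = ∅

namespace NrNFAwtl

variable {Q A : Type}

/-- A single computation step of an nrNFAwtl. -/
inductive Step (M : NrNFAwtl Q A) : NrConf Q A → NrConf Q A → Prop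
  | read (x : List A) (q q' : Q) (u v : List A) (a : A) :
      (∀ b ∈ u, b ∈ M.τ q) → a ∉ M.τ q → q' ∈ M.δ q a →
      Step M (.conf x q (u ++ a :: v)) (.conf (x ++ u) q' v)
  | restart (x w : List A) (q q' : Q) (S : Set Q) :
      (∀ b ∈ w, b ∈ M.τ q) → M.δend q = .cont S → q' ∈ S →
      Step M (.conf x q w) (.conf [] q' (x ++ w))
  | accept (x w : List A) (q : Q) :
      (∀ b ∈ w, b ∈ M.τ q) → M.δend q = .accept →
      Step M (.conf x q w) .accept

/-- The language accepted by an nrNFAwtl. -/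
def lang (M : NrNFAwtl Q A) : Set (List A) :=
  { w | ∃ q₀ ∈ M.I, Relation.ReflTransGen (Step M) (.conf [] q₀ w) .accept }

/-- An nrNFAwtl is deterministic (an nrDFAwtl) if it has a single initial
state and, for every state and every letter (including the end-of-tape
marker), at most one transition is available. -/
def IsDet (M : NrNFAwtl Q A) : Prop :=
  (∃ q, M.I = {q}) ∧ (∀ q a, (M.δ q a).Subsingleton) ∧
  (∀ q S, M.δend q = .cont S → S.Subsingleton)

end NrNFAwtl

/-- `L` is accepted by some NFAwtl. -/
def AcceptedByNFAwtl {A : Type} [Fintype A] (L : Set (List A)) : Prop :=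
  ∃ (Q : Type) (_ : Fintype Q) (M : NFAwtl Q A), M.lang = L

/-- `L` is accepted by some DFAwtl. -/
def AcceptedByDFAwtl {A : Type} [Fintype A] (L : Set (List A)) : Prop :=
  ∃ (Q : Type) (_ : Fintype Q) (M : NFAwtl Q A), M.IsDet ∧ M.lang = L

/-- `L` is accepted by some nrNFAwtl. -/
def AcceptedByNrNFAwtl {A : Type} [Fintype A] (L : Set (List A)) : Prop :=
  ∃ (Q : Type) (_ : Fintype Q) (M : NrNFAwtl Q A), M.lang = L

/-- `L` is accepted by some nrDFAwtl. -/
def AcceptedByNrDFAwtl {A : Type} [Fintype A] (L : Set (List A)) : Prop :=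
  ∃ (Q : Type) (_ : Fintype Q) (M : NrNFAwtl Q A), M.IsDet ∧ M.lang = L

/-- The three-letter alphabet `{a, b, c}`. -/
inductive Γ3 : Type
  | a | b | c
deriving DecidableEq

instance : Fintype Γ3 :=
  ⟨{Γ3.a, Γ3.b, Γ3.c}, fun x => by cases x <;> simp⟩

/-- The state set of the nrDFAwtl `A_ex3`. -/
inductive StEx3 : Type
  | q0 | q1 | q2 | q3 | q4 | q5 | q6 | q7 | q8
deriving DecidableEq

instance : Fintype StEx3 :=
  ⟨{StEx3.q0, StEx3.q1, StEx3.q2, StEx3.q3, StEx3.q4, StEx3.q5, StEx3.q6, StEx3.q7,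
    StEx3.q8}, fun x => by cases x <;> simp⟩

/-- The translucency mapping of `A_ex3`. -/
def τEx3 : StEx3 → Set Γ3
  | .q0 => {Γ3.a}
  | .q1 => ∅
  | .q2 => ∅
  | .q3 => {Γ3.b}
  | .q4 => ∅
  | .q5 => ∅
  | .q6 => {Γ3.a, Γ3.c}
  | .q7 => ∅
  | .q8 => ∅

/-- The letter transitions of `A_ex3`. -/
def δEx3 : StEx3 → Γ3 → Set StEx3
  | .q0, .b => {StEx3.q1}
  | .q1, .c => {StEx3.q2}
  | .q2, .a => {StEx3.q3}
  | .q3, .c => {StEx3.q4}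
  | .q4, .a => {StEx3.q5}
  | .q5, .b => {StEx3.q6}
  | .q6, .b => {StEx3.q1}
  | .q7, .a => {StEx3.q8}
  | _, _ => ∅

/-- The end-of-tape transitions of `A_ex3`. -/
def δendEx3 : StEx3 → EndMove StEx3
  | .q2 => .cont {StEx3.q7}
  | .q6 => .cont {StEx3.q0}
  | .q8 => .accept
  | _ => .cont ∅

/-- The nrDFAwtl `A_ex3` from Example 7 of the paper. -/
def Aex3 : NrNFAwtl StEx3 Γ3 where
  τ := τEx3
  I := {StEx3.q0}
  δ := δEx3
  δend := δendEx3
  tr_compat := by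
    intro q x h
    cases q <;> cases x <;> simp_all [τEx3, δEx3]

open Γ3 StEx3 in
private lemma Aex3_key (n : ℕ) :
    Relation.ReflTransGen (NrNFAwtl.Step Aex3)
      (.conf [a] q1 ((List.replicate n [c, a, c, a, b, b]).flatten ++ [c]))
      .accept := by
  induction n with
  | zero =>
    simp only [List.replicate_zero, List.flatten_nil, List.nil_append]
    refine .head (NrNFAwtl.Step.read [a] q1 q2 [] [] c ?_ ?_ ?_) ?_
    · simp
    · simp [Aex3, τEx3]
    · exact rfl
    refine .head (NrNFAwtl.Step.restart [a] [] q2 q7 {q7} ?_ rfl rfl) ?_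
    · simp
    refine .head (NrNFAwtl.Step.read [] q7 q8 [] [] a ?_ ?_ ?_) ?_
    · simp
    · simp [Aex3, τEx3]
    · exact rfl
    exact .single (NrNFAwtl.Step.accept [] [] q8 (by simp) rfl)
  | succ n ih =>
    rw [List.replicate_succ, List.flatten_cons, List.append_assoc]
    set rest := (List.replicate n [c, a, c, a, b, b]).flatten ++ [c] with hrest
    refine .head (NrNFAwtl.Step.read [a] q1 q2 [] (a :: c :: a :: b :: b :: rest) c
      (by simp) (by simp [Aex3, τEx3]) rfl) ?_
    refine .head (NrNFAwtl.Step.read [a] q2 q3 [] (c :: a :: b :: b :: rest) a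
      (by simp) (by simp [Aex3, τEx3]) rfl) ?_
    refine .head (NrNFAwtl.Step.read [a] q3 q4 [] (a :: b :: b :: rest) c
      (by simp) (by simp [Aex3, τEx3]) rfl) ?_
    refine .head (NrNFAwtl.Step.read [a] q4 q5 [] (b :: b :: rest) a
      (by simp) (by simp [Aex3, τEx3]) rfl) ?_
    refine .head (NrNFAwtl.Step.read [a] q5 q6 [] (b :: rest) b
      (by simp) (by simp [Aex3, τEx3]) rfl) ?_
    refine .head (NrNFAwtl.Step.read [a] q6 q1 [] rest b
      (by simp) (by simp [Aex3, τEx3]) rfl) ?_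
    exact ih

/-- Every word of the form `ab(cacabb)ⁿc` is accepted by
`A_ex3`. -/
theorem Aex3_accepts_ab_cacabb_pow_c (n : ℕ) :
    [Γ3.a, Γ3.b] ++
      (List.replicate n [Γ3.c, Γ3.a, Γ3.c, Γ3.a, Γ3.b, Γ3.b]).flatten ++
      [Γ3.c] ∈ Aex3.lang := by
  refine ⟨StEx3.q0, rfl, ?_⟩
  refine .head (NrNFAwtl.Step.read (M := Aex3) [] StEx3.q0 StEx3.q1 [Γ3.a]
    ((List.replicate n [Γ3.c, Γ3.a, Γ3.c, Γ3.a, Γ3.b, Γ3.b]).flatten ++ [Γ3.c]) Γ3.b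
    (by simp [Aex3, τEx3]) (by simp [Aex3, τEx3]) rfl) ?_
  exact Aex3_key n
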